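/- Let r ≥ 1, let b_1,…,b_r be nonzero real numbers, y_1,…,y_r real numbers, α_1,…,α_r real orders, and n_1,…,n_r nonnegative integers. Define Î_{n_1,…,n_r}(x) = (1/(n_1!⋯n_r!)) ∫_0^x ∏_{s=1}^r E_{n_s}^{(α_s)}(b_s z + y_s) dz, and for nonnegative integers k_1,…,k_r define Ĉ_{k_1,…,k_r}(x) = (1/(k_1!⋯k_r!)) ( ∏_{s=1}^r E_{k_s}^{(α_s)}(b_s x + y_s) − ∏_{s=1}^r E_{k_s}^{(α_s)}(y_s) ). Then with μ = n_1 + ⋯ + n_{r−1}, for every real x one has Î_{n_1,…,n_r}(x) = Σ_{a=0}^{μ} (−1)^a Σ_{j_1+⋯+j_{r−1}=a, 0 ≤ j_s ≤ n_s} (a!/(j_1!⋯j_{r−1}!)) b_1^{j_1}⋯b_{r−1}^{j_{r−1}} b_r^{−a−1} Ĉ_{n_1−j_1,…,n_{r−1}−j_{r−1}, n_r+a+1}(x) (the remainder integral vanishes because the (μ+1)-st derivative of the degree-μ product ∏_{s=1}^{r−1} E_{n_s}^{(α_s)}(b_s z + y_s) is zero). -/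

import Mathlib

/-- Higher-order Euler polynomial `E_m^{(α)}(z)` of real order `α`, defined as the `m`-th
Taylor coefficient (times `m!`) of the generating function `(2/(e^u+1))^α e^{uz}` at `u = 0`. -/
noncomputable def eulerH (α : ℝ) (m : ℕ) (z : ℝ) : ℝ :=
  iteratedDeriv m (fun u : ℝ => (2 / (Real.exp u + 1)) ^ α * Real.exp (u * z)) 0


open Finset Polynomial


private lemma itd_add {f g : ℝ → ℝ} (hf : ContDiff ℝ (⊤ : ℕ∞) f) (hg : ContDiff ℝ (⊤ : ℕ∞) g)
    (i : ℕ) (x : ℝ) :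
    iteratedDeriv i (fun u => f u + g u) x = iteratedDeriv i f x + iteratedDeriv i g x := by
  simp only [← iteratedDerivWithin_univ]
  exact iteratedDerivWithin_add (Set.mem_univ x) uniqueDiffOn_univ
    ((hf.of_le (by exact WithTop.coe_le_coe.mpr le_top)).contDiffWithinAt)
    ((hg.of_le (by exact WithTop.coe_le_coe.mpr le_top)).contDiffWithinAt)

private lemma itd_cmul {f : ℝ → ℝ} (hf : ContDiff ℝ (⊤ : ℕ∞) f) (c : ℝ) (i : ℕ) (x : ℝ) :
    iteratedDeriv i (fun u => c * f u) x = c * iteratedDeriv i f x := by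
  simp only [← iteratedDerivWithin_univ]
  exact iteratedDerivWithin_const_mul (Set.mem_univ x) uniqueDiffOn_univ c
    ((hf.of_le (by exact WithTop.coe_le_coe.mpr le_top)).contDiffWithinAt)

private lemma expand_aux (m : ℕ) : ∀ (f : ℝ → ℝ), ContDiff ℝ (⊤ : ℕ∞) f → ∀ z : ℝ,
    iteratedDeriv m (fun u => f u * Real.exp (u * z)) 0
      = ∑ i ∈ Finset.range (m + 1), (m.choose i : ℝ) * iteratedDeriv i f 0 * z ^ (m - i) := by
  induction m with
  | zero => intro f hf z; simp
  | succ m ih =>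
    intro f hf z
    have hdf : ContDiff ℝ (⊤ : ℕ∞) (deriv f) := (contDiff_infty_iff_deriv.mp hf).2
    have hexp : ∀ u : ℝ, HasDerivAt (fun u : ℝ => Real.exp (u * z)) (Real.exp (u * z) * z) u :=
      fun u => (hasDerivAt_mul_const z).exp
    have hder : deriv (fun u => f u * Real.exp (u * z))
        = fun u => (deriv f u + z * f u) * Real.exp (u * z) := by
      funext u
      have h1 : HasDerivAt f (deriv f u) u :=
        (hf.differentiable (by simp) u).hasDerivAt
      exact (h1.mul (hexp u)).deriv.trans (by ring)
    rw [iteratedDeriv_succ', hder, ih _ (hdf.add (contDiff_const.mul hf))]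
    have hterm : ∀ i, iteratedDeriv i (fun u => deriv f u + z * f u) 0
        = iteratedDeriv (i + 1) f 0 + z * iteratedDeriv i f 0 := by
      intro i
      rw [itd_add hdf (contDiff_const.mul hf), itd_cmul hf, iteratedDeriv_succ']
    have step1 : ∑ i ∈ Finset.range (m + 1),
            (m.choose i : ℝ) * iteratedDeriv i (fun u => deriv f u + z * f u) 0 * z ^ (m - i)
        = (∑ i ∈ Finset.range (m + 1),
            (m.choose i : ℝ) * iteratedDeriv (i + 1) f 0 * z ^ (m - i))
          + ∑ i ∈ Finset.range (m + 1),
            (m.choose i : ℝ) * iteratedDeriv i f 0 * z ^ (m + 1 - i) := by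
      rw [← Finset.sum_add_distrib]
      refine Finset.sum_congr rfl fun i hi => ?_
      rw [hterm i]
      have hi' : i ≤ m := Nat.lt_succ_iff.mp (Finset.mem_range.mp hi)
      have h2 : m + 1 - i = (m - i) + 1 := by omega
      rw [h2, pow_succ]; ring
    rw [step1]
    rw [Finset.sum_range_succ'
      (fun i => ((m + 1).choose i : ℝ) * iteratedDeriv i f 0 * z ^ (m + 1 - i)) (m + 1)]
    rw [Finset.sum_range_succ'
      (fun i => (m.choose i : ℝ) * iteratedDeriv i f 0 * z ^ (m + 1 - i)) m]
    simp only [Nat.succ_sub_succ_eq_sub, Nat.choose_succ_succ, Nat.choose_zero_right,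
      Nat.cast_add, Nat.cast_one, Nat.sub_zero]
    simp only [add_mul, Finset.sum_add_distrib]
    rw [Finset.sum_range_succ
      (fun i => (m.choose (i + 1) : ℝ) * iteratedDeriv (i + 1) f 0 * z ^ (m - i)) m]
    simp only [Nat.choose_succ_self, Nat.cast_zero]
    push_cast
    ring


/-- Taylor coefficients of the base generating function. -/
noncomputable def ehc (α : ℝ) (i : ℕ) : ℝ :=
  iteratedDeriv i (fun u : ℝ => (2 / (Real.exp u + 1)) ^ α) 0

/-- `eulerH` as a polynomial. -/
noncomputable def ep (α : ℝ) (m : ℕ) : Polynomial ℝ :=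
  ∑ i ∈ Finset.range (m + 1), Polynomial.C ((m.choose i : ℝ) * ehc α i) * Polynomial.X ^ (m - i)

private lemma base_smooth (α : ℝ) :
    ContDiff ℝ (⊤ : ℕ∞) (fun u : ℝ => (2 / (Real.exp u + 1)) ^ α) := by
  have h1 : ContDiff ℝ (⊤ : ℕ∞) (fun u : ℝ => 2 / (Real.exp u + 1)) := by
    refine ContDiff.div contDiff_const (Real.contDiff_exp.add contDiff_const) ?_
    intro x; positivity
  exact h1.rpow contDiff_const (fun x => by positivity)

lemma eulerH_eq_eval (α : ℝ) (m : ℕ) (z : ℝ) : eulerH α m z = (ep α m).eval z := by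
  rw [eulerH, expand_aux m _ (base_smooth α) z, ep]
  rw [Polynomial.eval_finset_sum]
  simp [ehc, mul_assoc]

lemma ep_natDegree (α : ℝ) (m : ℕ) : (ep α m).natDegree ≤ m := by
  refine (Polynomial.natDegree_sum_le _ _).trans ?_
  rw [Finset.fold_max_le]
  refine ⟨Nat.zero_le _, fun i hi => ?_⟩
  refine (Polynomial.natDegree_C_mul_le _ _).trans ?_
  simp [Polynomial.natDegree_X_pow]

lemma ep_derivative (α : ℝ) (m : ℕ) :
    Polynomial.derivative (ep α (m + 1)) = Polynomial.C ((m : ℝ) + 1) * ep α m := by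
  rw [ep, ep, map_sum, Finset.mul_sum]
  rw [Finset.sum_range_succ
    (fun i => Polynomial.derivative (Polynomial.C (((m+1).choose i : ℝ) * ehc α i) * Polynomial.X ^ (m + 1 - i))) (m+1)]
  simp only [Nat.sub_self, pow_zero, mul_one, Polynomial.derivative_C, add_zero]
  refine Finset.sum_congr rfl fun i hi => ?_
  have hi' : i ≤ m := Nat.lt_succ_iff.mp (Finset.mem_range.mp hi)
  rw [Polynomial.derivative_C_mul, Polynomial.derivative_X_pow]
  have h1 : m + 1 - i - 1 = m - i := by omega
  rw [h1, ← mul_assoc, ← Polynomial.C_mul, ← mul_assoc, ← Polynomial.C_mul]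
  have key : (m + 1).choose i * (m + 1 - i) = (m + 1) * m.choose i := by
    rw [← Nat.choose_mul_succ_eq m i, Nat.mul_comm]
  have keyR : (((m + 1).choose i : ℝ)) * (((m + 1 - i : ℕ)) : ℝ)
      = ((m : ℝ) + 1) * (m.choose i : ℝ) := by
    exact_mod_cast congrArg (fun t : ℕ => (t : ℝ)) key
  congr 1
  refine congrArg Polynomial.C ?_
  linear_combination ehc α i * keyR
private lemma epc_natDegree (α b y : ℝ) (m : ℕ) :
    ((ep α m).comp (Polynomial.C b * Polynomial.X + Polynomial.C y)).natDegree ≤ m := by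
  refine Polynomial.natDegree_comp_le.trans ?_
  have h1 : (Polynomial.C b * Polynomial.X + Polynomial.C y).natDegree ≤ 1 := by
    refine (Polynomial.natDegree_add_le _ _).trans ?_
    simp [Polynomial.natDegree_C]
    exact (Polynomial.natDegree_C_mul_le _ _).trans (by simp)
  calc (ep α m).natDegree * (Polynomial.C b * Polynomial.X + Polynomial.C y).natDegree
      ≤ m * 1 := Nat.mul_le_mul (ep_natDegree α m) h1
    _ = m := by omega

private lemma epc_deriv (α b y : ℝ) (m : ℕ) :
    Polynomial.derivative ((ep α (m + 1)).comp (Polynomial.C b * Polynomial.X + Polynomial.C y))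
      = Polynomial.C (b * ((m : ℝ) + 1)) *
          (ep α m).comp (Polynomial.C b * Polynomial.X + Polynomial.C y) := by
  rw [Polynomial.derivative_comp, ep_derivative]
  simp only [Polynomial.derivative_add, Polynomial.derivative_C, Polynomial.derivative_mul,
    Polynomial.derivative_X, Polynomial.mul_comp, Polynomial.C_comp, add_zero, mul_one,
    mul_zero, zero_add, zero_mul]
  rw [← mul_assoc, ← Polynomial.C_mul]

private lemma epc_iter (α b y : ℝ) (n : ℕ) : ∀ j, j ≤ n →
    Polynomial.derivative^[j] ((ep α n).comp (Polynomial.C b * Polynomial.X + Polynomial.C y))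
      = Polynomial.C (b ^ j * (n.descFactorial j : ℝ)) *
          (ep α (n - j)).comp (Polynomial.C b * Polynomial.X + Polynomial.C y) := by
  intro j
  induction j with
  | zero => intro _; simp
  | succ j ih =>
    intro hj
    have hj' : j ≤ n := by omega
    rw [Function.iterate_succ_apply', ih hj']
    obtain ⟨m, hm⟩ : ∃ m, n - j = m + 1 := ⟨n - j - 1, by omega⟩
    rw [Polynomial.derivative_C_mul, hm, epc_deriv, ← mul_assoc, ← Polynomial.C_mul]
    have h2 : n - (j + 1) = m := by omega
    rw [h2]
    congr 2
    have h3 : (n.descFactorial (j + 1) : ℝ) = ((n - j : ℕ) : ℝ) * (n.descFactorial j : ℝ) := by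
      rw [Nat.descFactorial_succ]; push_cast; ring
    rw [h3, hm]
    push_cast
    ring

private lemma epc_hasse (α b y : ℝ) (n j : ℕ) :
    Polynomial.hasseDeriv j ((ep α n).comp (Polynomial.C b * Polynomial.X + Polynomial.C y))
      = Polynomial.C (b ^ j * (n.choose j : ℝ)) *
          (ep α (n - j)).comp (Polynomial.C b * Polynomial.X + Polynomial.C y) := by
  rcases le_or_gt j n with hj | hj
  · have h1 := epc_iter α b y n j hj
    have h2 : (j.factorial) • Polynomial.hasseDeriv j
          ((ep α n).comp (Polynomial.C b * Polynomial.X + Polynomial.C y))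
        = Polynomial.derivative^[j]
          ((ep α n).comp (Polynomial.C b * Polynomial.X + Polynomial.C y)) := by
      have := congrFun (Polynomial.factorial_smul_hasseDeriv (R := ℝ) j)
        ((ep α n).comp (Polynomial.C b * Polynomial.X + Polynomial.C y))
      simpa using this
    have h3 : Polynomial.C ((j.factorial : ℝ)) * Polynomial.hasseDeriv j
          ((ep α n).comp (Polynomial.C b * Polynomial.X + Polynomial.C y))
        = Polynomial.C (b ^ j * (n.descFactorial j : ℝ)) *
          (ep α (n - j)).comp (Polynomial.C b * Polynomial.X + Polynomial.C y) := by
      rw [← h1, ← h2, nsmul_eq_mul, Polynomial.C_eq_natCast]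
    have h4 : Polynomial.C ((j.factorial : ℝ)) *
          (Polynomial.C (b ^ j * (n.choose j : ℝ)) *
            (ep α (n - j)).comp (Polynomial.C b * Polynomial.X + Polynomial.C y))
        = Polynomial.C (b ^ j * (n.descFactorial j : ℝ)) *
          (ep α (n - j)).comp (Polynomial.C b * Polynomial.X + Polynomial.C y) := by
      rw [← mul_assoc, ← Polynomial.C_mul]
      congr 2
      have h5 : (n.descFactorial j : ℝ) = (j.factorial : ℝ) * (n.choose j : ℝ) := by
        exact_mod_cast congrArg (fun t : ℕ => (t : ℝ)) (Nat.descFactorial_eq_factorial_mul_choose n j)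
      rw [h5]; ring
    exact mul_left_cancel₀ (Polynomial.C_ne_zero.mpr (by positivity)) (h3.trans h4.symm)
  · rw [Polynomial.hasseDeriv_eq_zero_of_lt_natDegree _ _
      (lt_of_le_of_lt (epc_natDegree α b y n) hj), Nat.choose_eq_zero_of_lt hj]
    simp
private lemma adT_sum {M : Type*} [AddCommMonoid M] (k a : ℕ) (F : (Fin (k + 1) → ℕ) → M) :
    ∑ j ∈ Finset.Nat.antidiagonalTuple (k + 1) a, F j
      = ∑ pq ∈ Finset.HasAntidiagonal.antidiagonal a, ∑ t ∈ Finset.Nat.antidiagonalTuple k pq.2,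
          F (Fin.cons pq.1 t) := by
  rw [Finset.sum_sigma']
  refine (Finset.sum_nbij' (i := fun x : (Σ _ : ℕ × ℕ, Fin k → ℕ) => Fin.cons x.1.1 x.2)
    (j := fun x => ⟨(x 0, ∑ i : Fin k, x i.succ), Fin.tail x⟩)
    ?_ ?_ ?_ ?_ ?_).symm
  · rintro ⟨⟨p, q⟩, t⟩ hx
    rw [Finset.mem_sigma] at hx
    obtain ⟨h1, h2⟩ := hx
    rw [Finset.HasAntidiagonal.mem_antidiagonal] at h1
    rw [Finset.Nat.mem_antidiagonalTuple] at h2 ⊢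
    rw [Fin.sum_univ_succ]
    simp [Fin.cons_zero, Fin.cons_succ, h2, h1]
  · intro x hx
    rw [Finset.Nat.mem_antidiagonalTuple] at hx
    rw [Finset.mem_sigma, Finset.HasAntidiagonal.mem_antidiagonal, Finset.Nat.mem_antidiagonalTuple]
    constructor
    · rw [← hx, Fin.sum_univ_succ]
    · rfl
  · rintro ⟨⟨p, q⟩, t⟩ hx
    rw [Finset.mem_sigma] at hx
    obtain ⟨h1, h2⟩ := hx
    rw [Finset.Nat.mem_antidiagonalTuple] at h2
    simp [Fin.cons_zero, Fin.cons_succ, Fin.tail_cons, h2]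
  · intro x hx
    exact Fin.cons_self_tail x
  · rintro ⟨⟨p, q⟩, t⟩ _
    rfl

private lemma hasse_prod : ∀ (k : ℕ) (g : Fin k → Polynomial ℝ) (a : ℕ),
    Polynomial.hasseDeriv a (∏ i, g i)
      = ∑ j ∈ Finset.Nat.antidiagonalTuple k a, ∏ i, Polynomial.hasseDeriv (j i) (g i) := by
  intro k
  induction k with
  | zero =>
    intro g a
    match a with
    | 0 => simp [Polynomial.hasseDeriv_zero']
    | a + 1 =>
      rw [show (∏ i : Fin 0, g i) = Polynomial.C 1 by simp]
      rw [Polynomial.hasseDeriv_C _ _ (Nat.succ_pos a)]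
      simp
  | succ k ih =>
    intro g a
    rw [Fin.prod_univ_succ, Polynomial.hasseDeriv_mul, adT_sum]
    refine Finset.sum_congr rfl fun pq _ => ?_
    rw [ih (fun i => g i.succ) pq.2, Finset.mul_sum]
    refine Finset.sum_congr rfl fun t _ => ?_
    rw [Fin.prod_univ_succ]
    simp [Fin.cons_zero, Fin.cons_succ]
private lemma poly_ftc (q : Polynomial ℝ) (x : ℝ) :
    ∫ z in (0:ℝ)..x, (Polynomial.derivative q).eval z = q.eval x - q.eval 0 := by
  refine intervalIntegral.integral_eq_sub_of_hasDerivAt (fun z _ => q.hasDerivAt z) ?_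
  exact ((Polynomial.derivative q).continuous).intervalIntegrable _ _

private lemma ibp (μ : ℕ) : ∀ (P : Polynomial ℝ) (F : ℕ → Polynomial ℝ), P.natDegree ≤ μ →
    (∀ a, Polynomial.derivative (F (a + 1)) = F a) → ∀ x : ℝ,
    (∫ z in (0:ℝ)..x, P.eval z * (Polynomial.derivative (F 0)).eval z)
      = ∑ a ∈ Finset.range (μ + 1), (-1 : ℝ) ^ a *
          ((Polynomial.derivative^[a] P).eval x * (F a).eval x
            - (Polynomial.derivative^[a] P).eval 0 * (F a).eval 0) := by
  induction μ with
  | zero =>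
    intro P F hdeg hF x
    have hP : P = Polynomial.C (P.coeff 0) := Polynomial.eq_C_of_natDegree_le_zero hdeg
    have key : ∀ z : ℝ, P.eval z * (Polynomial.derivative (F 0)).eval z
        = (Polynomial.derivative (P * F 0)).eval z := by
      intro z
      rw [hP, Polynomial.derivative_mul]
      simp
    rw [intervalIntegral.integral_congr (fun z _ => key z), poly_ftc, Finset.sum_range_one]
    simp
  | succ μ ih =>
    intro P F hdeg hF x
    have key : ∀ z : ℝ, P.eval z * (Polynomial.derivative (F 0)).eval z
        = (Polynomial.derivative (P * F 0)).eval z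
          - (Polynomial.derivative P).eval z * (F 0).eval z := by
      intro z; rw [Polynomial.derivative_mul]
      simp only [Polynomial.eval_add, Polynomial.eval_mul]; ring
    rw [intervalIntegral.integral_congr (fun z _ => key z),
      intervalIntegral.integral_sub (f := fun z => (Polynomial.derivative (P * F 0)).eval z)
        (g := fun z => (Polynomial.derivative P).eval z * (F 0).eval z)
        (((Polynomial.derivative (P * F 0)).continuous).intervalIntegrable _ _)
        ((((Polynomial.derivative P).continuous).mul ((F 0).continuous)).intervalIntegrable _ _),
      poly_ftc]
    have hd : (Polynomial.derivative P).natDegree ≤ μ :=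
      le_trans (Polynomial.natDegree_derivative_le P) (by omega)
    have hF0 : Polynomial.derivative (F 1) = F 0 := hF 0
    rw [show (fun z => (Polynomial.derivative P).eval z * (F 0).eval z)
        = fun z => (Polynomial.derivative P).eval z
            * (Polynomial.derivative ((fun a => F (a + 1)) 0)).eval z by
      simp only [hF0]]
    rw [ih (Polynomial.derivative P) (fun a => F (a + 1)) hd (fun a => hF (a + 1)) x]
    rw [Finset.sum_range_succ' (fun a => (-1 : ℝ) ^ a *
          ((Polynomial.derivative^[a] P).eval x * (F a).eval x
            - (Polynomial.derivative^[a] P).eval 0 * (F a).eval 0)) (μ + 1)]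
    have hterm : ∀ a ∈ Finset.range (μ + 1), (-1 : ℝ) ^ (a + 1) *
          ((Polynomial.derivative^[a + 1] P).eval x * (F (a + 1)).eval x
            - (Polynomial.derivative^[a + 1] P).eval 0 * (F (a + 1)).eval 0)
        = -((-1 : ℝ) ^ a *
          ((Polynomial.derivative^[a] (Polynomial.derivative P)).eval x * (F (a + 1)).eval x
            - (Polynomial.derivative^[a] (Polynomial.derivative P)).eval 0
              * (F (a + 1)).eval 0)) := by
      intro a _
      rw [Function.iterate_succ_apply, pow_succ]
      ring
    rw [Finset.sum_congr rfl hterm, Finset.sum_neg_distrib]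
    simp only [pow_zero, one_mul, Function.iterate_zero_apply, Polynomial.eval_mul]
    ring
private noncomputable def Qp (α b y : ℝ) (n : ℕ) : Polynomial ℝ :=
  (ep α n).comp (Polynomial.C b * Polynomial.X + Polynomial.C y)

private lemma Qp_eval (α b y : ℝ) (n : ℕ) (z : ℝ) :
    (Qp α b y n).eval z = eulerH α n (b * z + y) := by
  rw [Qp]
  simp only [Polynomial.eval_comp, Polynomial.eval_add, Polynomial.eval_mul, Polynomial.eval_C,
    Polynomial.eval_X]
  exact (eulerH_eq_eval _ _ _).symm

private lemma Qp_natDegree (α b y : ℝ) (n : ℕ) : (Qp α b y n).natDegree ≤ n :=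
  epc_natDegree α b y n

private lemma Qp_hasse (α b y : ℝ) (n j : ℕ) :
    Polynomial.hasseDeriv j (Qp α b y n)
      = Polynomial.C (b ^ j * (n.choose j : ℝ)) * Qp α b y (n - j) :=
  epc_hasse α b y n j

private noncomputable def dcoef (nl a : ℕ) (bl : ℝ) : ℝ :=
  (nl.factorial : ℝ) / (((nl + a + 1).factorial : ℝ) * bl ^ (a + 1))

private noncomputable def Fp (αl bl yl : ℝ) (nl a : ℕ) : Polynomial ℝ :=
  Polynomial.C (dcoef nl a bl) * Qp αl bl yl (nl + a + 1)

private lemma Fp_eval (αl bl yl : ℝ) (nl a : ℕ) (w : ℝ) :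
    (Fp αl bl yl nl a).eval w = dcoef nl a bl * eulerH αl (nl + a + 1) (bl * w + yl) := by
  rw [Fp, Polynomial.eval_mul, Polynomial.eval_C, Qp_eval]

private lemma Fp_deriv_succ (αl bl yl : ℝ) (nl a : ℕ) (hbl : bl ≠ 0) :
    Polynomial.derivative (Fp αl bl yl nl (a + 1)) = Fp αl bl yl nl a := by
  rw [Fp, Fp, Polynomial.derivative_C_mul, Qp]
  have e1 : nl + (a + 1) + 1 = (nl + a + 1) + 1 := by omega
  rw [e1, epc_deriv, ← mul_assoc, ← Polynomial.C_mul, ← Qp]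
  congr 2
  have hA : ((nl + a + 1).factorial : ℝ) ≠ 0 := Nat.cast_ne_zero.mpr (Nat.factorial_ne_zero _)
  have hm : (((nl + a + 1 : ℕ) : ℝ) + 1) ≠ 0 := by positivity
  rw [dcoef, dcoef, e1, Nat.factorial_succ (nl + a + 1)]
  push_cast
  field_simp
  ring

private lemma Fp_deriv_zero (αl bl yl : ℝ) (nl : ℕ) (hbl : bl ≠ 0) :
    Polynomial.derivative (Fp αl bl yl nl 0) = Qp αl bl yl nl := by
  rw [Fp, Polynomial.derivative_C_mul, Qp]
  have e1 : nl + 0 + 1 = nl + 1 := by omega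
  rw [e1, epc_deriv, ← mul_assoc, ← Polynomial.C_mul, ← Qp]
  have : dcoef nl 0 bl * (bl * ((nl : ℝ) + 1)) = 1 := by
    rw [dcoef]
    have e2 : nl + 0 + 1 = nl + 1 := by omega
    rw [e2, Nat.factorial_succ]
    have h1 : (nl.factorial : ℝ) ≠ 0 := Nat.cast_ne_zero.mpr (Nat.factorial_ne_zero _)
    have h2 : ((nl : ℝ) + 1) ≠ 0 := by positivity
    push_cast
    field_simp
  rw [this, Polynomial.C_1, one_mul]

private lemma coeff_id (k a : ℕ) (n : Fin (k + 1) → ℕ) (b : Fin (k + 1) → ℝ)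
    (hb : ∀ s, b s ≠ 0) (j : Fin k → ℕ) (hj : ∀ i, j i ≤ n i.castSucc) :
    (1 / ∏ s, ((n s).factorial : ℝ)) *
        ((a.factorial : ℝ) * dcoef (n (Fin.last k)) a (b (Fin.last k)) *
          ∏ i, (b i.castSucc ^ (j i) * ((n i.castSucc).choose (j i) : ℝ)))
      = (a.factorial : ℝ) / (∏ i, ((j i).factorial : ℝ)) * (∏ i, b i.castSucc ^ (j i)) *
          b (Fin.last k) ^ (-(a : ℤ) - 1) *
          (1 / ((∏ i, ((n i.castSucc - j i).factorial : ℝ)) *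
            ((n (Fin.last k) + a + 1).factorial : ℝ))) := by
  have hzp : b (Fin.last k) ^ (-(a : ℤ) - 1) = (b (Fin.last k) ^ (a + 1))⁻¹ := by
    have : (-(a : ℤ) - 1) = -((a + 1 : ℕ) : ℤ) := by push_cast; ring
    rw [this, zpow_neg, zpow_natCast]
  rw [hzp, dcoef]
  rw [Fin.prod_univ_castSucc (f := fun s => ((n s).factorial : ℝ))]
  rw [Finset.prod_mul_distrib]
  have hch : (∏ i : Fin k, ((n i.castSucc).choose (j i) : ℝ))
      = (∏ i : Fin k, ((n i.castSucc).factorial : ℝ)) /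
        ((∏ i : Fin k, ((j i).factorial : ℝ)) * ∏ i : Fin k, ((n i.castSucc - j i).factorial : ℝ)) := by
    rw [← Finset.prod_mul_distrib, ← Finset.prod_div_distrib]
    refine Finset.prod_congr rfl fun i _ => ?_
    rw [Nat.cast_choose ℝ (hj i)]
  rw [hch]
  have h1 : (∏ i : Fin k, ((n i.castSucc).factorial : ℝ)) ≠ 0 :=
    Finset.prod_ne_zero_iff.mpr fun i _ => Nat.cast_ne_zero.mpr (Nat.factorial_ne_zero _)
  have h2 : (∏ i : Fin k, ((j i).factorial : ℝ)) ≠ 0 :=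
    Finset.prod_ne_zero_iff.mpr fun i _ => Nat.cast_ne_zero.mpr (Nat.factorial_ne_zero _)
  have h3 : (∏ i : Fin k, ((n i.castSucc - j i).factorial : ℝ)) ≠ 0 :=
    Finset.prod_ne_zero_iff.mpr fun i _ => Nat.cast_ne_zero.mpr (Nat.factorial_ne_zero _)
  have h4 : ((n (Fin.last k)).factorial : ℝ) ≠ 0 := Nat.cast_ne_zero.mpr (Nat.factorial_ne_zero _)
  have h5 : ((n (Fin.last k) + a + 1).factorial : ℝ) ≠ 0 :=
    Nat.cast_ne_zero.mpr (Nat.factorial_ne_zero _)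
  have h6 : b (Fin.last k) ≠ 0 := hb (Fin.last k)
  field_simp

/-- STATEMENT 1, with `r = k + 1 ≥ 1`; the first `r - 1` indices are the `i.castSucc` for
`i : Fin k` and the last index (`r`) is `Fin.last k`. Here `μ = n_1 + ⋯ + n_{r-1}`. Terms of
the inner sum in which some `j s > n s` are taken to be zero (implemented by filtering). -/
theorem stmt_1 (k : ℕ) (b y α : Fin (k + 1) → ℝ) (hb : ∀ s, b s ≠ 0)
    (n : Fin (k + 1) → ℕ) (x : ℝ) :
    (1 / ∏ s, ((n s).factorial : ℝ)) *
        ∫ z in (0 : ℝ)..x, ∏ s, eulerH (α s) (n s) (b s * z + y s)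
      = ∑ a ∈ Finset.range ((∑ i : Fin k, n i.castSucc) + 1), (-1 : ℝ) ^ a *
          ∑ j ∈ (Finset.Nat.antidiagonalTuple k a).filter
              (fun j => ∀ i, j i ≤ n i.castSucc),
            ((a.factorial : ℝ) / ∏ i, ((j i).factorial : ℝ)) *
            (∏ i, b i.castSucc ^ (j i)) * b (Fin.last k) ^ (-(a : ℤ) - 1) *
            ((1 / ((∏ i, ((n i.castSucc - j i).factorial : ℝ)) *
                  ((n (Fin.last k) + a + 1).factorial : ℝ))) *
              ((∏ i, eulerH (α i.castSucc) (n i.castSucc - j i)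
                    (b i.castSucc * x + y i.castSucc)) *
                  eulerH (α (Fin.last k)) (n (Fin.last k) + a + 1)
                    (b (Fin.last k) * x + y (Fin.last k))
                - (∏ i, eulerH (α i.castSucc) (n i.castSucc - j i) (y i.castSucc)) *
                  eulerH (α (Fin.last k)) (n (Fin.last k) + a + 1) (y (Fin.last k)))) := by
  classical
  have hbl := hb (Fin.last k)
  set P : Polynomial ℝ :=
    ∏ i : Fin k, Qp (α i.castSucc) (b i.castSucc) (y i.castSucc) (n i.castSucc) with hP
  set F : ℕ → Polynomial ℝ :=
    fun a => Fp (α (Fin.last k)) (b (Fin.last k)) (y (Fin.last k)) (n (Fin.last k)) a with hFdef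
  have hdegP : P.natDegree ≤ ∑ i : Fin k, n i.castSucc := by
    rw [hP]
    exact le_trans (Polynomial.natDegree_prod_le _ _)
      (Finset.sum_le_sum fun i _ => Qp_natDegree _ _ _ _)
  have hint : (∫ z in (0:ℝ)..x, ∏ s, eulerH (α s) (n s) (b s * z + y s))
      = ∫ z in (0:ℝ)..x, P.eval z * (Polynomial.derivative (F 0)).eval z := by
    refine intervalIntegral.integral_congr fun z _ => ?_
    show _ = P.eval z * (Polynomial.derivative (F 0)).eval z
    rw [hFdef]
    show _ = P.eval z * (Polynomial.derivative (Fp _ _ _ _ 0)).eval z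
    rw [Fp_deriv_zero _ _ _ _ hbl, hP, Polynomial.eval_prod,
      Fin.prod_univ_castSucc (f := fun s => eulerH (α s) (n s) (b s * z + y s))]
    congr 1
    · exact Finset.prod_congr rfl fun i _ => (Qp_eval _ _ _ _ _).symm
    · exact (Qp_eval _ _ _ _ _).symm
  have hibp := ibp (∑ i : Fin k, n i.castSucc) P F hdegP
    (fun a => Fp_deriv_succ _ _ _ _ a hbl) x
  have hDP : ∀ (a : ℕ) (w : ℝ), (Polynomial.derivative^[a] P).eval w
      = (a.factorial : ℝ) * ∑ j ∈ Finset.Nat.antidiagonalTuple k a,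
          ((∏ i : Fin k, (b i.castSucc ^ (j i) * ((n i.castSucc).choose (j i) : ℝ))) *
            ∏ i : Fin k,
              eulerH (α i.castSucc) (n i.castSucc - j i) (b i.castSucc * w + y i.castSucc)) := by
    intro a w
    have h1 : Polynomial.derivative^[a] P = a.factorial • Polynomial.hasseDeriv a P := by
      rw [← congrFun (Polynomial.factorial_smul_hasseDeriv (R := ℝ) a) P]
      simp
    rw [h1, hP, hasse_prod k _ a, nsmul_eq_mul, Polynomial.eval_mul, Polynomial.eval_natCast,
      Polynomial.eval_finset_sum]
    congr 1
    refine Finset.sum_congr rfl fun j _ => ?_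
    have h2 : ∏ i : Fin k, Polynomial.hasseDeriv (j i)
          (Qp (α i.castSucc) (b i.castSucc) (y i.castSucc) (n i.castSucc))
        = Polynomial.C
            (∏ i : Fin k, (b i.castSucc ^ (j i) * ((n i.castSucc).choose (j i) : ℝ))) *
          ∏ i : Fin k, Qp (α i.castSucc) (b i.castSucc) (y i.castSucc) (n i.castSucc - j i) := by
      rw [Finset.prod_congr rfl (fun i _ => Qp_hasse (α i.castSucc) (b i.castSucc) (y i.castSucc)
        (n i.castSucc) (j i)), Finset.prod_mul_distrib, ← map_prod]
    rw [h2, Polynomial.eval_mul, Polynomial.eval_C, Polynomial.eval_prod]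
    congr 1
    exact Finset.prod_congr rfl fun i _ => Qp_eval _ _ _ _ _
  have hFeval : ∀ (a : ℕ) (w : ℝ), (F a).eval w
      = dcoef (n (Fin.last k)) a (b (Fin.last k)) *
          eulerH (α (Fin.last k)) (n (Fin.last k) + a + 1)
            (b (Fin.last k) * w + y (Fin.last k)) := fun a w => Fp_eval _ _ _ _ _ _
  rw [hint, hibp, Finset.mul_sum]
  refine Finset.sum_congr rfl fun a ha => ?_
  rw [hDP a x, hDP a 0, hFeval a x, hFeval a 0]
  simp only [mul_zero, zero_add]
  rw [Finset.sum_filter]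
  rw [Finset.mul_sum, Finset.mul_sum, Finset.sum_mul, Finset.sum_mul,
    ← Finset.sum_sub_distrib, Finset.mul_sum, Finset.mul_sum, Finset.mul_sum]
  refine Finset.sum_congr rfl fun j hj => ?_
  by_cases hcond : ∀ i, j i ≤ n i.castSucc
  · rw [if_pos hcond]
    have hc := coeff_id k a n b hb j hcond
    linear_combination ((-1 : ℝ) ^ a *
      ((∏ i : Fin k, eulerH (α i.castSucc) (n i.castSucc - j i)
          (b i.castSucc * x + y i.castSucc)) *
        eulerH (α (Fin.last k)) (n (Fin.last k) + a + 1)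
          (b (Fin.last k) * x + y (Fin.last k))
      - (∏ i : Fin k, eulerH (α i.castSucc) (n i.castSucc - j i) (y i.castSucc)) *
        eulerH (α (Fin.last k)) (n (Fin.last k) + a + 1) (y (Fin.last k)))) * hc
  · rw [if_neg hcond]
    push_neg at hcond
    obtain ⟨i0, hi0⟩ := hcond
    have hz : (∏ i : Fin k, (b i.castSucc ^ (j i) * ((n i.castSucc).choose (j i) : ℝ))) = 0 := by
      refine Finset.prod_eq_zero (Finset.mem_univ i0) ?_
      rw [Nat.choose_eq_zero_of_lt hi0]
      simp
    rw [hz]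
    ring
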